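/- arXiv:math/0608242 — 3 statements merged into one kernel-verified Lean document; each statement's English description precedes it below -/
import Mathlib

section
/- Let f be a nonnegative function on finite sequences over a set Y defined by f(y_1,...,y_n) = f(∅) ∏_{i=1}^n ∏_{z ⊆ {y_1,...,y_{i-1}}} φ(y_i, z), where φ(u, z) = 1 whenever z is not a u-clique with respect to a reflexive relation ~ (a u-clique is a finite set z with u ~ y for all y ∈ z). Then f is hereditary: if f(y) > 0 then f(z) > 0 for every subsequence z of y. -/
/-- A density on finite sequences defined by a clique factorisation, with interaction
function equal to `1` off cliques, is hereditary: `f(y) > 0` implies `f(z) > 0` for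
every subsequence `z` of `y`. -/
theorem cliqueFactorisation_hereditary {Y : Type*} [DecidableEq Y] [Inhabited Y]
    (r : Y → Y → Prop) (hrefl : ∀ u, r u u)
    (φ : Y → Finset Y → ℝ) (hφ0 : ∀ u z, 0 ≤ φ u z)
    (hφ1 : ∀ (u : Y) (z : Finset Y), ¬ (∀ v ∈ z, r u v) → φ u z = 1)
    (f : List Y → ℝ) (hfe : 0 < f [])
    (hf : ∀ y : List Y,
      f y = f [] * ∏ i ∈ Finset.range y.length,
        ∏ z ∈ ((y.take i).toFinset).powerset, φ (y.getD i default) z) :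
    ∀ y z : List Y, z.Sublist y → 0 < f y → 0 < f z := by
  have pos_iff : ∀ y : List Y, 0 < f y ↔
      ∀ i < y.length, ∀ w ⊆ (y.take i).toFinset, 0 < φ (y.getD i default) w := by
    intro y
    rw [hf y]
    constructor
    · intro hp i hi w hw
      rcases (hφ0 (y.getD i default) w).lt_or_eq with h | h
      · exact h
      · exfalso
        have h1 : ∏ z ∈ ((y.take i).toFinset).powerset, φ (y.getD i default) z = 0 :=
          Finset.prod_eq_zero (Finset.mem_powerset.2 hw) h.symm
        have h2 : (∏ i ∈ Finset.range y.length,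
            ∏ z ∈ ((y.take i).toFinset).powerset, φ (y.getD i default) z) = 0 :=
          Finset.prod_eq_zero (Finset.mem_range.2 hi) h1
        rw [h2, mul_zero] at hp
        exact lt_irrefl 0 hp
    · intro h
      refine mul_pos hfe (Finset.prod_pos fun i hi => Finset.prod_pos fun w hw => ?_)
      exact h i (Finset.mem_range.1 hi) w (Finset.mem_powerset.1 hw)
  have key : ∀ (z y : List Y), z.Sublist y → ∀ s : Finset Y,
      (∀ i < y.length, ∀ w ⊆ s ∪ (y.take i).toFinset, 0 < φ (y.getD i default) w) →
      (∀ i < z.length, ∀ w ⊆ s ∪ (z.take i).toFinset, 0 < φ (z.getD i default) w) := by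
    intro z y h
    induction h with
    | slnil => intro s H i hi; simp at hi
    | @cons l₁ l₂ a h ih =>
        intro s H
        apply ih
        intro i hi w hw
        have hsub : s ∪ (l₂.take i).toFinset ⊆
            s ∪ ((a :: l₂).take (i + 1)).toFinset := by
          intro x hx
          simp only [List.take_succ_cons, List.toFinset_cons, Finset.mem_union,
            Finset.mem_insert] at hx ⊢
          tauto
        have := H (i + 1) (by simpa using Nat.succ_lt_succ hi) w (hw.trans hsub)
        simpa using this
    | @cons_cons l₁ l₂ a h ih =>
        intro s H
        have H2 : ∀ i < l₂.length, ∀ w ⊆ insert a s ∪ (l₂.take i).toFinset,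
            0 < φ (l₂.getD i default) w := by
          intro i hi w hw
          have hsub : insert a s ∪ (l₂.take i).toFinset ⊆
              s ∪ ((a :: l₂).take (i + 1)).toFinset := by
            intro x hx
            simp only [List.take_succ_cons, List.toFinset_cons, Finset.mem_union,
              Finset.mem_insert] at hx ⊢
            tauto
          have := H (i + 1) (by simpa using Nat.succ_lt_succ hi) w (hw.trans hsub)
          simpa using this
        have H1 := ih (insert a s) H2
        intro i hi w hw
        match i with
        | 0 =>
            have : w ⊆ s ∪ (((a :: l₂)).take 0).toFinset := by
              simpa using hw
            have := H 0 (by simp) w this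
            simpa using this
        | Nat.succ j =>
            have hj : j < l₁.length := by simpa using hi
            have hsub : s ∪ ((a :: l₁).take (j + 1)).toFinset ⊆
                insert a s ∪ (l₁.take j).toFinset := by
              intro x hx
              simp only [List.take_succ_cons, List.toFinset_cons, Finset.mem_union,
                Finset.mem_insert] at hx ⊢
              tauto
            have := H1 j hj w (hw.trans hsub)
            simpa using this
  intro y z hzy hy
  rw [pos_iff] at hy ⊢
  have := key z y hzy ∅ (by simpa using hy)
  simpa using this
end

section
/- Let f on finite sequences over Y satisfy the clique factorization f(y_1,...,y_n) = f(∅) ∏_{i=1}^n ∏_{z ⊆ {y_1,...,y_{i-1}}} φ(y_i, z) with φ(u,z) = 1 on non-u-cliques. Then for any sequence y with f(y) > 0 and any point u, the ratio f((y,u))/f(y) equals ∏_{z ⊆ ∂(u) ∩ {y_1,...,y_n}} φ(u, z), where ∂(u) = {v : u ~ v}; in particular the ratio depends only on u and its directed neighbours among the components of y. -/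
/-- For a density on finite sequences given by a clique factorisation (with interaction
function `φ` equal to `1` off cliques), the ratio `f((y,u))/f(y)` equals the product of
`φ(u, z)` over all subsets `z` of the directed neighbours of `u` among the components of
`y`; in particular it depends only on `u` and these directed neighbours. -/
theorem cliqueFactorisation_ratio {Y : Type*} [DecidableEq Y] [Inhabited Y]
    (r : Y → Y → Prop) [DecidableRel r] (hrefl : ∀ u, r u u)
    (φ : Y → Finset Y → ℝ) (hφ0 : ∀ u z, 0 ≤ φ u z)
    (hφ1 : ∀ (u : Y) (z : Finset Y), ¬ (∀ v ∈ z, r u v) → φ u z = 1)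
    (f : List Y → ℝ) (hfe : 0 < f [])
    (hf : ∀ y : List Y,
      f y = f [] * ∏ i ∈ Finset.range y.length,
        ∏ z ∈ ((y.take i).toFinset).powerset, φ (y.getD i default) z) :
    (∀ (y : List Y) (u : Y), 0 < f y →
        f (y ++ [u]) / f y
          = ∏ z ∈ (y.toFinset.filter (fun v => r u v)).powerset, φ u z)
    ∧ (∀ (y y' : List Y) (u : Y), 0 < f y → 0 < f y' →
        y.toFinset.filter (fun v => r u v) = y'.toFinset.filter (fun v => r u v) →
        f (y ++ [u]) / f y = f (y' ++ [u]) / f y') := by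
  have key : ∀ (y : List Y) (u : Y), 0 < f y →
      f (y ++ [u]) / f y
        = ∏ z ∈ (y.toFinset.filter (fun v => r u v)).powerset, φ u z := by
    intro y u hy
    have hstep : f (y ++ [u]) = f y * ∏ z ∈ y.toFinset.powerset, φ u z := by
      rw [hf (y ++ [u]), hf y]
      have hlen : (y ++ [u]).length = y.length + 1 := by simp
      rw [hlen, Finset.prod_range_succ]
      have h1 : ∀ i ∈ Finset.range y.length,
          (∏ z ∈ (((y ++ [u]).take i).toFinset).powerset, φ ((y ++ [u]).getD i default) z)
            = ∏ z ∈ ((y.take i).toFinset).powerset, φ (y.getD i default) z := by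
        intro i hi
        simp only [Finset.mem_range] at hi
        rw [List.take_append_of_le_length (le_of_lt hi),
          List.getD_eq_getElem?_getD, List.getD_eq_getElem?_getD,
          List.getElem?_append_left hi]
      rw [Finset.prod_congr rfl h1]
      have h2 : (y ++ [u]).take y.length = y := by
        simp [List.take_append_of_le_length]
      have h3 : (y ++ [u]).getD y.length default = u := by
        rw [List.getD_eq_getElem?_getD, List.getElem?_append_right le_rfl]
        simp
      rw [h2, h3, mul_assoc]
    rw [hstep, mul_div_cancel_left₀ _ (ne_of_gt hy)]
    symm
    apply Finset.prod_subset
    · exact Finset.powerset_mono.2 (Finset.filter_subset _ _)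
    · intro z hz hz'
      apply hφ1
      intro hall
      apply hz'
      rw [Finset.mem_powerset] at hz ⊢
      intro v hv
      exact Finset.mem_filter.2 ⟨hz hv, hall v hv⟩
  refine ⟨key, fun y y' u hy hy' heq => ?_⟩
  rw [key y u hy, key y' u hy', heq]
end

section
/- For the simple sequential inhibition interaction functions φ(x, ∅) = r_1 π(x) and φ(x, y) = 1{d(x, y) > r} exp[Σ_{z ⊆ y} (−1)^{|y∖z|} log(r_{|z|+1}/I(z))] (for nonempty y with I(z) > 0 for all z ⊆ y), the product form yields: if d(x_{n+1}, {x_1,...,x_n}) > r and I({x_1,...,x_n}) > 0 then ∏_{y ⊆ {x_1,...,x_n}} φ(x_{n+1}, y) = r_{n+1} π(x_{n+1}) / I({x_1,...,x_n}), and the product is 0 if d(x_{n+1}, {x_1,...,x_n}) ≤ r. -/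
open Finset

lemma inner_mobius {α : Type*} [DecidableEq α] (x w : Finset α) (hw : w ⊆ x) :
    (∑ y ∈ x.powerset, (if w ⊆ y then ((-1:ℝ)) ^ (y \ w).card else 0))
      = if w = x then 1 else 0 := by
  rw [← Finset.sum_filter]
  have hbij : (∑ y ∈ x.powerset.filter (fun y => w ⊆ y), ((-1:ℝ)) ^ (y \ w).card)
      = ∑ s ∈ (x \ w).powerset, ((-1:ℝ)) ^ s.card := by
    refine Finset.sum_nbij' (fun y => y \ w) (fun s => s ∪ w) ?_ ?_ ?_ ?_ ?_
    · intro y hy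
      simp only [mem_filter, mem_powerset] at hy
      exact mem_powerset.2 (sdiff_subset_sdiff hy.1 le_rfl)
    · intro s hs
      simp only [mem_powerset] at hs
      have hsx : s ⊆ x := hs.trans (sdiff_subset)
      exact mem_filter.2 ⟨mem_powerset.2 (union_subset hsx hw), subset_union_right⟩
    · intro y hy
      simp only [mem_filter, mem_powerset] at hy
      rw [sdiff_union_of_subset hy.2]
    · intro s hs
      simp only [mem_powerset] at hs
      have hd : Disjoint s w := Finset.disjoint_of_subset_left hs sdiff_disjoint
      rw [Finset.union_sdiff_cancel_right hd]
    · intro y hy; rfl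
  rw [hbij]
  have := @Finset.sum_powerset_neg_one_pow_card α _ (x \ w)
  have hc : (∑ s ∈ (x \ w).powerset, ((-1:ℝ)) ^ s.card)
      = ((∑ s ∈ (x \ w).powerset, ((-1:ℤ)) ^ s.card : ℤ) : ℝ) := by
    push_cast; rfl
  rw [hc, this]
  by_cases h : w = x
  · simp [h]
  · have : x \ w ≠ ∅ := by
      rw [Ne, Finset.sdiff_eq_empty_iff_subset]
      intro hxw
      exact h (subset_antisymm hw hxw)
    simp [this, h]

lemma mobius_sum {α : Type*} [DecidableEq α] (x : Finset α) (g : Finset α → ℝ) :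
    ∑ y ∈ x.powerset, ∑ w ∈ y.powerset, ((-1:ℝ)) ^ (y \ w).card * g w = g x := by
  have step : ∀ y ∈ x.powerset,
      (∑ w ∈ y.powerset, ((-1:ℝ)) ^ (y \ w).card * g w)
        = ∑ w ∈ x.powerset, (if w ⊆ y then ((-1:ℝ)) ^ (y \ w).card else 0) * g w := by
    intro y hy
    rw [mem_powerset] at hy
    rw [← Finset.sum_filter_of_ne (p := fun w => w ⊆ y) (f := fun w => (if w ⊆ y then ((-1:ℝ)) ^ (y \ w).card else 0) * g w)]
    · refine Finset.sum_congr ?_ ?_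
      · ext w; simp only [mem_filter, mem_powerset]
        constructor
        · exact fun h => ⟨h.trans hy, h⟩
        · exact fun h => h.2
      · intro w hw
        simp only [mem_filter, mem_powerset] at hw ⊢
        rw [if_pos hw.2]
    · intro w hw hne
      by_contra h
      simp [h] at hne
  rw [Finset.sum_congr rfl step, Finset.sum_comm]
  have : ∀ w ∈ x.powerset,
      (∑ y ∈ x.powerset, (if w ⊆ y then ((-1:ℝ)) ^ (y \ w).card else 0) * g w)
        = (if w = x then 1 else 0) * g w := by
    intro w hw
    rw [← Finset.sum_mul, inner_mobius x w (mem_powerset.1 hw)]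
  rw [Finset.sum_congr rfl this]
  simp

open MeasureTheory
open scoped Classical

/-- Simple sequential inhibition: with interaction functions `φ(x,∅) = r₁ π(x)` and, for
nonempty `y`, `φ(x,y) = 1{d(x,y) > r} exp[Σ_{z ⊆ y} (−1)^{|y∖z|} log(r_{|z|+1}/I(z))]`,
the product `∏_{y ⊆ {x₁,…,xₙ}} φ(x_{n+1}, y)` equals
`r_{n+1} π(x_{n+1}) / I({x₁,…,xₙ})` when `d(x_{n+1},{x₁,…,xₙ}) > r`, and `0` when
`d(x_{n+1},{x₁,…,xₙ}) ≤ r`. -/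
theorem simple_sequential_inhibition_product
    [DecidableEq (EuclideanSpace ℝ (Fin 2))]
    (D : Set (EuclideanSpace ℝ (Fin 2))) (hD : MeasurableSet D)
    (hDb : Bornology.IsBounded D)
    (π : EuclideanSpace ℝ (Fin 2) → ℝ) (hπ : ∀ z ∈ D, 0 < π z)
    (hπint : IntegrableOn π D volume) (hπ1 : ∫ z in D, π z = 1)
    (r : ℝ) (hr : 0 < r)
    (rseq : ℕ → ℝ) (hrseq : ∀ n, 0 < rseq n)
    (I : Finset (EuclideanSpace ℝ (Fin 2)) → ℝ)
    (hI : ∀ x : Finset (EuclideanSpace ℝ (Fin 2)),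
      I x = ∫ z in D, π z * (if ∀ w ∈ x, r < ‖z - w‖ then 1 else 0))
    (φ : EuclideanSpace ℝ (Fin 2) → Finset (EuclideanSpace ℝ (Fin 2)) → ℝ)
    (hφ0 : ∀ z, φ z ∅ = rseq 1 * π z)
    (hφ : ∀ (z : EuclideanSpace ℝ (Fin 2)) (y : Finset (EuclideanSpace ℝ (Fin 2))),
      y ≠ ∅ → (∀ w ∈ y.powerset, 0 < I w) →
      φ z y = (if ∀ w ∈ y, r < ‖z - w‖ then 1 else 0) *
        Real.exp (∑ w ∈ y.powerset,
          (-1 : ℝ) ^ (y \ w).card * Real.log (rseq (w.card + 1) / I w)))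
    (x : Finset (EuclideanSpace ℝ (Fin 2))) (u : EuclideanSpace ℝ (Fin 2))
    (hIx : ∀ w ∈ x.powerset, 0 < I w) :
    ((∀ w ∈ x, r < ‖u - w‖) →
      ∏ y ∈ x.powerset, φ u y = rseq (x.card + 1) * π u / I x)
    ∧ ((∃ w ∈ x, ‖u - w‖ ≤ r) → ∏ y ∈ x.powerset, φ u y = 0) := by
  have hIxpos : 0 < I x := hIx x (mem_powerset.2 le_rfl)
  have hI0 : I ∅ = 1 := by
    rw [hI]
    simp only [Finset.notMem_empty, false_implies, implies_true, if_true, mul_one]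
    exact hπ1
  set g : Finset (EuclideanSpace ℝ (Fin 2)) → ℝ :=
    fun w => Real.log (rseq (w.card + 1) / I w) with hg
  constructor
  · intro hd
    have hmem0 : (∅ : Finset (EuclideanSpace ℝ (Fin 2))) ∈ x.powerset :=
      mem_powerset.2 (empty_subset x)
    rw [← Finset.mul_prod_erase _ _ hmem0, hφ0]
    have hprod : ∏ y ∈ x.powerset.erase ∅, φ u y
        = Real.exp (∑ y ∈ x.powerset.erase ∅,
            ∑ w ∈ y.powerset, (-1:ℝ) ^ (y \ w).card * g w) := by
      rw [Real.exp_sum]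
      refine Finset.prod_congr rfl ?_
      intro y hy
      have hy' := Finset.mem_of_mem_erase hy
      have hyne : y ≠ ∅ := Finset.ne_of_mem_erase hy
      have hys : y ⊆ x := mem_powerset.1 hy'
      rw [hφ u y hyne (fun w hw =>
        hIx w (mem_powerset.2 ((mem_powerset.1 hw).trans hys)))]
      rw [if_pos (fun w hw => hd w (hys hw)), one_mul]
    have hS0 : (∑ w ∈ (∅ : Finset (EuclideanSpace ℝ (Fin 2))).powerset,
        (-1:ℝ) ^ ((∅ : Finset (EuclideanSpace ℝ (Fin 2))) \ w).card * g w) = g ∅ := by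
      simp
    have hsum : (∑ y ∈ x.powerset.erase ∅,
        ∑ w ∈ y.powerset, (-1:ℝ) ^ (y \ w).card * g w) = g x - g ∅ := by
      have := Finset.add_sum_erase x.powerset
        (fun y => ∑ w ∈ y.powerset, (-1:ℝ) ^ (y \ w).card * g w) hmem0
      have hmob := mobius_sum x g
      rw [hmob] at this
      simp only [hS0] at this
      linarith
    rw [hprod, hsum]
    have hgx : g x = Real.log (rseq (x.card + 1) / I x) := rfl
    have hg0 : g ∅ = Real.log (rseq 1) := by
      simp [hg, hI0]
    rw [hgx, hg0, Real.exp_sub, Real.exp_log (div_pos (hrseq _) hIxpos),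
      Real.exp_log (hrseq 1)]
    have h1 : rseq 1 ≠ 0 := ne_of_gt (hrseq 1)
    have h2 : I x ≠ 0 := ne_of_gt hIxpos
    field_simp
  · rintro ⟨w, hw, hle⟩
    refine Finset.prod_eq_zero (i := {w}) (mem_powerset.2 (singleton_subset_iff.2 hw)) ?_
    have hne : ({w} : Finset (EuclideanSpace ℝ (Fin 2))) ≠ ∅ := by simp
    rw [hφ u {w} hne (fun s hs => hIx s (mem_powerset.2
      ((mem_powerset.1 hs).trans (singleton_subset_iff.2 hw))))]
    rw [if_neg, zero_mul]
    push_neg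
    exact ⟨w, mem_singleton_self w, hle⟩
end
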